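/- Token-level soft optimality extends to sequence-level softmax: let Σ be a nonempty finite alphabet, L ≥ 1, β > 0, and for each j ∈ {1,…,L} let r_j : Σ^j → ℝ be a per-token reward. Define recursively V_L ≡ 0 on Σ^L; for j = L down to 1, Q_j : Σ^j → ℝ by Q_j(w·a) = r_j(w·a) + V_j(w·a) for w ∈ Σ^{j−1}, a ∈ Σ, and V_{j−1} : Σ^{j−1} → ℝ by V_{j−1}(w) = β·log Σ_{a∈Σ} exp(Q_j(w·a)/β). Let the token policy be π_j(a|w) = exp(Q_j(w·a)/β) / Σ_{a'∈Σ} exp(Q_j(w·a')/β). Then for every sequence (a₁,…,a_L) ∈ Σ^L, with R(a₁,…,a_L) = Σ_{j=1}^{L} r_j(a₁,…,a_j) and V₀ the value of the empty prefix: (i) Π_{j=1}^{L} π_j(a_j | a₁,…,a_{j−1}) = exp( (R(a₁,…,a_L) − V₀)/β ); and (ii) the induced sequence distribution is the softmax of the total return, Π_{j=1}^{L} π_j(a_j | a₁,…,a_{j−1}) = exp(R(a₁,…,a_L)/β) / Σ_{(b₁,…,b_L)∈Σ^L} exp(R(b₁,…,b_L)/β), equivalently V₀ = β·log Σ_{b∈Σ^L}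 exp(R(b)/β). -/

import Mathlib

/-- Soft value of a prefix with `k` tokens remaining:
`Vrem β r 0 w = 0` and
`Vrem β r (k+1) w = β·log Σ_a exp((r(w·a) + Vrem β r k (w·a))/β)`.
If `w` has length `L − k` then this is the value `V_{L−k}(w)` of the recursion
`V_L ≡ 0`, `V_{j−1}(w) = β·log Σ_a exp(Q_j(w·a)/β)` with
`Q_j(w·a) = r(w·a) + V_j(w·a)`. -/
noncomputable def Vrem {σ : Type*} [Fintype σ]
    (β : ℝ) (reward : List σ → ℝ) : ℕ → List σ → ℝ
  | 0, _ => 0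
  | k + 1, w =>
      β * Real.log (∑ a, Real.exp ((reward (w ++ [a]) + Vrem β reward k (w ++ [a])) / β))


lemma expVrem {σ : Type*} [Fintype σ] [Nonempty σ]
    (β : ℝ) (hβ : 0 < β) (reward : List σ → ℝ) (k : ℕ) (w : List σ) :
    Real.exp (Vrem β reward (k + 1) w / β)
      = ∑ a, Real.exp ((reward (w ++ [a]) + Vrem β reward k (w ++ [a])) / β) := by
  have hpos : 0 < ∑ a, Real.exp ((reward (w ++ [a]) + Vrem β reward k (w ++ [a])) / β) :=
    Finset.sum_pos (fun a _ => Real.exp_pos _) Finset.univ_nonempty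
  rw [show Vrem β reward (k+1) w = β * Real.log (∑ a, Real.exp ((reward (w ++ [a]) + Vrem β reward k (w ++ [a])) / β)) from rfl]
  rw [mul_div_cancel_left₀ _ (ne_of_gt hβ), Real.exp_log hpos]

lemma expVrem_sum {σ : Type*} [Fintype σ] [Nonempty σ]
    (β : ℝ) (hβ : 0 < β) (reward : List σ → ℝ) (k : ℕ) (w : List σ) :
    Real.exp (Vrem β reward k w / β)
      = ∑ s : Fin k → σ,
          Real.exp ((∑ j : Fin k, reward (w ++ (List.ofFn s).take (j.val + 1))) / β) := by
  induction k generalizing w with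
  | zero => simp [Vrem]
  | succ k ih =>
    rw [expVrem β hβ reward k w]
    rw [← (Fin.consEquiv (fun _ : Fin (k+1) => σ)).sum_comp, Fintype.sum_prod_type]
    refine Finset.sum_congr rfl fun a _ => ?_
    have h1 : Real.exp ((reward (w ++ [a]) + Vrem β reward k (w ++ [a])) / β)
        = Real.exp (reward (w ++ [a]) / β) * Real.exp (Vrem β reward k (w ++ [a]) / β) := by
      rw [← Real.exp_add, ← add_div]
    rw [h1, ih (w ++ [a]), Finset.mul_sum]
    refine Finset.sum_congr rfl fun t _ => ?_
    have hofn : List.ofFn ((Fin.consEquiv (fun _ : Fin (k+1) => σ)) (a, t)) = a :: List.ofFn t := by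
      rw [List.ofFn_succ]
      simp [Fin.consEquiv]
    have hsum : (∑ j : Fin (k+1),
          reward (w ++ (List.ofFn ((Fin.consEquiv (fun _ : Fin (k+1) => σ)) (a, t))).take (j.val + 1)))
        = reward (w ++ [a]) + ∑ j : Fin k, reward ((w ++ [a]) ++ (List.ofFn t).take (j.val + 1)) := by
      rw [hofn, Fin.sum_univ_succ]
      refine congrArg₂ (· + ·) (by simp) ?_
      refine Finset.sum_congr rfl fun j _ => ?_
      congr 1
      rw [show j.succ.val + 1 = j.val + 1 + 1 from rfl, List.take_succ_cons, ← List.append_cons]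
    rw [← Real.exp_add, ← add_div, hsum]

/-- Token-level soft optimality extends to sequence-level softmax:
with token policy `π_j(a|w) = exp(Q_j(w·a)/β)/Σ_{a'} exp(Q_j(w·a')/β)`, for every
sequence `x ∈ Σ^L`: (i) `Π_j π_j(x_j|x_{<j}) = exp((R(x) − V₀)/β)`; (ii) the
induced sequence distribution is the softmax of the total return `R`; and
equivalently `V₀ = β·log Σ_{y∈Σ^L} exp(R(y)/β)`. -/
theorem stmt19 {σ : Type*} [Fintype σ] [Nonempty σ]
    (L : ℕ) (hL : 1 ≤ L) (β : ℝ) (hβ : 0 < β) (reward : List σ → ℝ) :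
    (∀ x : Fin L → σ,
      ((∏ j : Fin L,
          Real.exp ((reward ((List.ofFn x).take (j.val + 1)) +
              Vrem β reward (L - (j.val + 1)) ((List.ofFn x).take (j.val + 1))) / β) /
            ∑ a : σ,
              Real.exp ((reward (((List.ofFn x).take j.val) ++ [a]) +
                Vrem β reward (L - (j.val + 1)) (((List.ofFn x).take j.val) ++ [a])) / β))
        = Real.exp (((∑ j : Fin L, reward ((List.ofFn x).take (j.val + 1))) -
            Vrem β reward L []) / β))
      ∧ ((∏ j : Fin L,
          Real.exp ((reward ((List.ofFn x).take (j.val + 1)) +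
              Vrem β reward (L - (j.val + 1)) ((List.ofFn x).take (j.val + 1))) / β) /
            ∑ a : σ,
              Real.exp ((reward (((List.ofFn x).take j.val) ++ [a]) +
                Vrem β reward (L - (j.val + 1)) (((List.ofFn x).take j.val) ++ [a])) / β))
        = Real.exp ((∑ j : Fin L, reward ((List.ofFn x).take (j.val + 1))) / β) /
            ∑ y : Fin L → σ,
              Real.exp ((∑ j : Fin L, reward ((List.ofFn y).take (j.val + 1))) / β)))
    ∧ Vrem β reward L []
        = β * Real.log (∑ y : Fin L → σ,
            Real.exp ((∑ j : Fin L, reward ((List.ofFn y).take (j.val + 1))) / β)) := by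
  have hV0 : Real.exp (Vrem β reward L [] / β)
      = ∑ y : Fin L → σ, Real.exp ((∑ j : Fin L, reward ((List.ofFn y).take (j.val + 1))) / β) := by
    rw [expVrem_sum β hβ reward L []]
    simp
  have part1 : ∀ x : Fin L → σ,
      (∏ j : Fin L,
          Real.exp ((reward ((List.ofFn x).take (j.val + 1)) +
              Vrem β reward (L - (j.val + 1)) ((List.ofFn x).take (j.val + 1))) / β) /
            ∑ a : σ,
              Real.exp ((reward (((List.ofFn x).take j.val) ++ [a]) +
                Vrem β reward (L - (j.val + 1)) (((List.ofFn x).take j.val) ++ [a])) / β))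
        = Real.exp (((∑ j : Fin L, reward ((List.ofFn x).take (j.val + 1))) -
            Vrem β reward L []) / β) := by
    intro x
    have hden : ∀ j : Fin L,
        (∑ a : σ,
          Real.exp ((reward (((List.ofFn x).take j.val) ++ [a]) +
            Vrem β reward (L - (j.val + 1)) (((List.ofFn x).take j.val) ++ [a])) / β))
        = Real.exp (Vrem β reward (L - j.val) ((List.ofFn x).take j.val) / β) := by
      intro j
      rw [← expVrem β hβ reward (L - (j.val + 1)) ((List.ofFn x).take j.val)]
      have hn : L - (j.val + 1) + 1 = L - j.val := by omega
      rw [hn]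
    set f : ℕ → ℝ := fun m => Vrem β reward (L - m) ((List.ofFn x).take m) / β with hf
    have step : (∏ j : Fin L,
          Real.exp ((reward ((List.ofFn x).take (j.val + 1)) +
              Vrem β reward (L - (j.val + 1)) ((List.ofFn x).take (j.val + 1))) / β) /
            ∑ a : σ,
              Real.exp ((reward (((List.ofFn x).take j.val) ++ [a]) +
                Vrem β reward (L - (j.val + 1)) (((List.ofFn x).take j.val) ++ [a])) / β))
        = Real.exp (∑ j : Fin L,
            (reward ((List.ofFn x).take (j.val + 1)) / β + (f (j.val + 1) - f j.val))) := by
      rw [Real.exp_sum]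
      refine Finset.prod_congr rfl fun j _ => ?_
      rw [hden j, ← Real.exp_sub]
      congr 1
      simp only [hf, add_div]
      ring
    rw [step]
    congr 1
    rw [Finset.sum_add_distrib]
    rw [Fin.sum_univ_eq_sum_range (fun i => f (i + 1) - f i) L, Finset.sum_range_sub f L]
    have hfL : f L = 0 := by simp [hf, Nat.sub_self, Vrem]
    have hf0 : f 0 = Vrem β reward L [] / β := by simp [hf]
    rw [hfL, hf0, sub_div, Finset.sum_div]
    ring
  refine ⟨fun x => ⟨part1 x, ?_⟩, ?_⟩
  · rw [part1 x, sub_div, Real.exp_sub, hV0]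
  · have h := congrArg Real.log hV0
    rw [Real.log_exp] at h
    rw [← h]
    field_simp
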